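/- arXiv:1504.06107 — 4 statements merged into one kernel-verified Lean document; each statement's English description precedes it below -/
import Mathlib

section
/- Let $t > 0$, $b \in \mathbb{R}$, $x \in \mathbb{R}$, and $\phi : \mathbb{R} \to \mathbb{R}$ be a bounded continuous function. Let $W_t \sim \mathcal{N}(0, t)$. Then the map $x \mapsto \mathbb{E}[\phi(x + bt + W_t)]$ is differentiable and $\frac{d}{dx}\,\mathbb{E}\big[\phi(x + bt + W_t)\big] = \mathbb{E}\Big[\phi(x + bt + W_t)\,\frac{W_t}{t}\Big]$. -/
open MeasureTheory ProbabilityTheory Real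
open scoped NNReal ENNReal

lemma integral_gaussianReal_eq_pdf_mul (v : ℝ≥0) (hv : v ≠ 0) (f : ℝ → ℝ) :
    ∫ w, f w ∂(gaussianReal 0 v) = ∫ w, gaussianPDFReal 0 v w * f w := by
  rw [gaussianReal_of_var_ne_zero _ hv]
  have h : gaussianPDF 0 v = fun w => ((gaussianPDFReal 0 v w).toNNReal : ℝ≥0∞) := rfl
  rw [h, integral_withDensity_eq_integral_smul₀
    ((measurable_gaussianPDFReal 0 v).real_toNNReal.aemeasurable) f]
  congr 1
  ext w
  rw [NNReal.smul_def, Real.coe_toNNReal _ (gaussianPDFReal_nonneg 0 v w), smul_eq_mul]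

/-- Gaussian integration by parts (Bismut–Elworthy–Li) for first derivatives:
for bounded continuous `φ`, `d/dx E[φ(x + bt + W_t)] = E[φ(x + bt + W_t) W_t / t]`
where `W_t ∼ N(0, t)`. -/
theorem gaussian_ibp_first_order
    (t b x : ℝ) (ht : 0 < t) (φ : ℝ → ℝ)
    (hφc : Continuous φ) (hφb : ∃ M, ∀ y, |φ y| ≤ M) :
    HasDerivAt (fun z => ∫ w, φ (z + b * t + w) ∂(gaussianReal 0 ⟨t, ht.le⟩))
      (∫ w, φ (x + b * t + w) * (w / t) ∂(gaussianReal 0 ⟨t, ht.le⟩)) x := by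
  obtain ⟨M, hM⟩ := hφb
  have hM0 : 0 ≤ M := le_trans (abs_nonneg _) (hM 0)
  set v : ℝ≥0 := ⟨t, ht.le⟩ with hv
  have hv0 : v ≠ 0 := by
    intro h
    rw [← NNReal.coe_eq_zero] at h
    simp only [hv, NNReal.coe_mk] at h
    exact ht.ne' h
  have hvt : (v : ℝ) = t := rfl
  set c : ℝ := (Real.sqrt (2 * π * t))⁻¹ with hc
  have hc0 : 0 < c := by
    rw [hc]
    positivity
  have hG : ∀ s : ℝ, gaussianPDFReal 0 v s = c * Real.exp (-s ^ 2 / (2 * t)) := by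
    intro s
    simp only [gaussianPDFReal, sub_zero, hvt, hc]
  set F : ℝ → ℝ → ℝ := fun z u => gaussianPDFReal 0 v (u - z - b * t) * φ u with hF
  set F' : ℝ → ℝ → ℝ :=
    fun z u => (u - z - b * t) / t * gaussianPDFReal 0 v (u - z - b * t) * φ u with hF'
  -- change of variables
  have hCoV : ∀ (z : ℝ) (f : ℝ → ℝ),
      ∫ w, gaussianPDFReal 0 v (w - z - b * t) * f w = ∫ w, gaussianPDFReal 0 v w * f (z + b * t + w) := by
    intro z f
    rw [← integral_add_right_eq_self (fun w => gaussianPDFReal 0 v (w - z - b * t) * f w) (z + b * t)]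
    congr 1
    ext w
    ring_nf
  have hCoV' : ∀ (z : ℝ) (f : ℝ → ℝ),
      ∫ w, (w - z - b * t) / t * gaussianPDFReal 0 v (w - z - b * t) * f w
        = ∫ w, gaussianPDFReal 0 v w * (f (z + b * t + w) * (w / t)) := by
    intro z f
    rw [← integral_add_right_eq_self
      (fun w => (w - z - b * t) / t * gaussianPDFReal 0 v (w - z - b * t) * f w) (z + b * t)]
    congr 1
    ext w
    ring_nf
  -- the main differentiation-under-the-integral step
  set bound : ℝ → ℝ := fun u =>
    M * c * Real.exp (1 / t) / t *
      ((|u - x - b * t| + 1) * Real.exp (-(1 / (4 * t)) * (u - x - b * t) ^ 2)) with hbound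
  have hGmeas : Measurable (gaussianPDFReal 0 v) := measurable_gaussianPDFReal 0 v
  have hF_meas : ∀ᶠ z in nhds x, AEStronglyMeasurable (F z) volume := by
    refine Filter.Eventually.of_forall fun z => ?_
    exact ((hGmeas.comp (by fun_prop)).mul hφc.measurable).aestronglyMeasurable
  have hF_int : Integrable (F x) := by
    have h1 : Integrable (fun u => gaussianPDFReal 0 v (u - (x + b * t))) :=
      (integrable_gaussianPDFReal 0 v).comp_sub_right (x + b * t)
    have h2 := h1.bdd_mul (c := M) hφc.aestronglyMeasurable (Filter.Eventually.of_forall fun y => by simpa using hM y)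
    refine h2.congr (Filter.Eventually.of_forall fun u => ?_)
    simp only [hF]
    rw [show u - x - b * t = u - (x + b * t) by ring, mul_comm]
  have hF'_meas : AEStronglyMeasurable (F' x) volume := by
    exact (((by fun_prop : Measurable fun u : ℝ => (u - x - b * t) / t).mul
      (hGmeas.comp (by fun_prop))).mul hφc.measurable).aestronglyMeasurable
  have h_bound : ∀ᵐ u : ℝ, ∀ z ∈ Metric.ball x 1, ‖F' z u‖ ≤ bound u := by
    refine Filter.Eventually.of_forall fun u z hz => ?_
    rw [Metric.mem_ball, Real.dist_eq] at hz
    set s : ℝ := u - z - b * t with hs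
    set s₀ : ℝ := u - x - b * t with hs0
    have hss : |s| ≤ |s₀| + 1 := by
      have : s = s₀ - (z - x) := by rw [hs, hs0]; ring
      rw [this]
      calc |s₀ - (z - x)| = |s₀ + -(z - x)| := by rw [sub_eq_add_neg]
        _ ≤ |s₀| + |(-(z - x))| := abs_add_le _ _
        _ = |s₀| + |z - x| := by rw [abs_neg]
        _ ≤ |s₀| + 1 := by linarith
    have hexp : Real.exp (-s ^ 2 / (2 * t)) ≤
        Real.exp (1 / t) * Real.exp (-(1 / (4 * t)) * s₀ ^ 2) := by
      rw [← Real.exp_add]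
      apply Real.exp_le_exp.mpr
      have hδ : (z - x) ^ 2 ≤ 1 := by
        nlinarith [abs_nonneg (z - x), sq_abs (z - x)]
      have hs0s : s₀ = s + (z - x) := by rw [hs, hs0]; ring
      have key : s₀ ^ 2 ≤ 4 + 2 * s ^ 2 := by
        rw [hs0s]; nlinarith [sq_nonneg (s - (z - x))]
      calc -s ^ 2 / (2 * t) = (-2 * s ^ 2) / (4 * t) := by ring
        _ ≤ (4 - s₀ ^ 2) / (4 * t) := by gcongr ?_ / (4 * t); linarith
        _ = 1 / t + -(1 / (4 * t)) * s₀ ^ 2 := by field_simp; ring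
    have hnorm : ‖F' z u‖ = |s| / t * (c * Real.exp (-s ^ 2 / (2 * t))) * |φ u| := by
      simp only [hF', Real.norm_eq_abs, abs_mul, ← hs]
      rw [hG s, abs_div, abs_of_pos ht, abs_mul, abs_of_pos hc0,
        abs_of_pos (Real.exp_pos _)]
    rw [hnorm]
    calc |s| / t * (c * Real.exp (-s ^ 2 / (2 * t))) * |φ u|
        ≤ (|s₀| + 1) / t * (c * (Real.exp (1 / t) * Real.exp (-(1 / (4 * t)) * s₀ ^ 2))) * M := by
          gcongr ?_ / t * (c * ?_) * ?_
          exact hM u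
      _ = bound u := by rw [hbound]; ring
  have h_bound_int : Integrable bound := by
    have h1 : Integrable (fun s : ℝ => (|s| + 1) * Real.exp (-(1 / (4 * t)) * s ^ 2)) := by
      have ha : (0:ℝ) < 1 / (4 * t) := by positivity
      have h2 := (integrable_mul_exp_neg_mul_sq ha).abs
      have h3 : Integrable (fun s : ℝ => |s| * Real.exp (-(1 / (4 * t)) * s ^ 2)) := by
        refine h2.congr (Filter.Eventually.of_forall fun s => ?_)
        simp only []
        rw [abs_mul, abs_of_pos (Real.exp_pos _)]
      have h4 : Integrable (fun s : ℝ => Real.exp (-(1 / (4 * t)) * s ^ 2)) :=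
        integrable_exp_neg_mul_sq ha
      refine (h3.add h4).congr (Filter.Eventually.of_forall fun s => ?_)
      simp only [Pi.add_apply]
      ring
    have h5 := (h1.comp_sub_right (x + b * t)).const_mul (M * c * Real.exp (1 / t) / t)
    refine h5.congr (Filter.Eventually.of_forall fun u => ?_)
    simp only [hbound, sub_sub]
  have h_diff : ∀ᵐ u : ℝ, ∀ z ∈ Metric.ball x 1, HasDerivAt (F · u) (F' z u) z := by
    refine Filter.Eventually.of_forall fun u z _ => ?_
    have h1 : HasDerivAt (fun z : ℝ => u - z - b * t) (-1) z := by
      simpa using ((hasDerivAt_id z).const_sub u).sub_const (b * t)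
    have h2 : HasDerivAt (fun z : ℝ => -(u - z - b * t) ^ 2 / (2 * t))
        ((-(2 * (u - z - b * t) ^ 1 * -1)) / (2 * t)) z := ((h1.pow 2).neg).div_const (2 * t)
    have h3 := h2.exp
    have h4 := (h3.const_mul c).mul_const (φ u)
    have hfun : (fun z : ℝ => c * Real.exp (-(u - z - b * t) ^ 2 / (2 * t)) * φ u) = fun z => F z u := by
      ext z
      rw [hF]
      simp only [hG]
    rw [hfun] at h4
    convert h4 using 1
    on_goal 1 => rfl
    on_goal 1 => rfl
    simp only [hF', hG]
    field_simp
  have key := hasDerivAt_integral_of_dominated_loc_of_deriv_le (Metric.ball_mem_nhds x one_pos) hF_meas hF_int hF'_meas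
    h_bound h_bound_int h_diff
  have hfun_eq : (fun z => ∫ w, φ (z + b * t + w) ∂(gaussianReal 0 ⟨t, ht.le⟩))
      = fun z => ∫ u, F z u := by
    ext z
    rw [← hv, integral_gaussianReal_eq_pdf_mul v hv0, ← hCoV z φ]
  have hval_eq : (∫ w, φ (x + b * t + w) * (w / t) ∂(gaussianReal 0 ⟨t, ht.le⟩))
      = ∫ u, F' x u := by
    rw [← hv, integral_gaussianReal_eq_pdf_mul v hv0, ← hCoV' x φ]
  rw [hfun_eq, hval_eq]
  exact key.2
end

section
/- Let $t > 0$, $c_1, c_2 \in \mathbb{R}$ with $c_2 \neq 0$, and $x \in \mathbb{R}$ with $c_1 + c_2 x \neq 0$. Let $W_t \sim \mathcal{N}(0,t)$ and $\overline{X}^x_t := -\frac{c_1}{c_2} + (\frac{c_1}{c_2} + x) e^{-c_2^2 t/2 + c_2 W_t}$. Then for every bounded continuous $\phi : \mathbb{R} \to \mathbb{R}$, the map $x \mapsto \mathbb{E}[\phi(\overline{X}^x_t)]$ is twice differentiable and $\frac{d^2}{dx^2}\, \mathbb{E}\big[\phi(\overline{X}^x_t)\big] = \mathbb{E}\Big[\phi(\overline{X}^x_t)\,\frac{1}{(c_1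 + c_2 x)^2}\Big(-c_2\frac{W_t}{t} + \frac{W_t^2 - t}{t^2}\Big)\Big]$. -/
open MeasureTheory ProbabilityTheory

open Real Filter
open scoped NNReal ENNReal

namespace LognormalAux

lemma shift_ineq {b u s : ℝ} (hb : 0 ≤ b) :
    -(2 * b) * (u - s) ^ 2 ≤ 2 * b * s ^ 2 + -(b * u ^ 2) := by
  nlinarith [mul_nonneg hb (sq_nonneg (u - 2 * s))]

lemma param_integrable (ψ : ℝ → ℝ) (hψ : Continuous ψ) (M : ℝ) (hM : ∀ u, |ψ u| ≤ M)
    (k : ℝ → ℝ) (hkc : Continuous k) (b C : ℝ) (hb : 0 < b)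
    (hkb : ∀ z, |k z| ≤ C * Real.exp (-(2 * b) * z ^ 2)) (s : ℝ) :
    Integrable (fun u => ψ u * k (u - s)) := by
  have hM0 : 0 ≤ M := (abs_nonneg _).trans (hM 0)
  have hC : 0 ≤ C := by
    have h0 := (abs_nonneg (k 0)).trans (hkb 0)
    nlinarith [Real.exp_pos (-(2 * b) * (0:ℝ) ^ 2)]
  refine Integrable.mono'
    ((integrable_exp_neg_mul_sq hb).const_mul (M * C * Real.exp (2 * b * s ^ 2)))
    ((hψ.mul (hkc.comp (continuous_id.sub continuous_const))).aestronglyMeasurable)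
    (Eventually.of_forall fun u => ?_)
  rw [Real.norm_eq_abs, abs_mul]
  calc |ψ u| * |k (u - s)| ≤ M * (C * Real.exp (-(2 * b) * (u - s) ^ 2)) :=
        mul_le_mul (hM u) (hkb _) (abs_nonneg _) hM0
    _ ≤ M * C * (Real.exp (2 * b * s ^ 2) * Real.exp (-b * u ^ 2)) := by
        rw [← mul_assoc]
        refine mul_le_mul_of_nonneg_left ?_ (mul_nonneg hM0 hC)
        rw [← Real.exp_add]
        exact Real.exp_le_exp.mpr (by simpa [neg_mul] using shift_ineq (u := u) (s := s) hb.le)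
    _ = M * C * Real.exp (2 * b * s ^ 2) * Real.exp (-b * u ^ 2) := by ring

lemma param_hasDerivAt (ψ : ℝ → ℝ) (hψ : Continuous ψ) (M : ℝ) (hM : ∀ u, |ψ u| ≤ M)
    (k k' : ℝ → ℝ) (hk : ∀ z, HasDerivAt k (k' z) z) (hk'c : Continuous k')
    (b C : ℝ) (hb : 0 < b)
    (hkb : ∀ z, |k z| ≤ C * Real.exp (-(2 * b) * z ^ 2))
    (hk'b : ∀ z, |k' z| ≤ C * Real.exp (-(2 * b) * z ^ 2)) (s : ℝ) :
    HasDerivAt (fun r => ∫ u, ψ u * k (u - r)) (∫ u, ψ u * -k' (u - s)) s := by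
  have hkc : Continuous k := by
    rw [continuous_iff_continuousAt]; exact fun z => (hk z).continuousAt
  have hM0 : 0 ≤ M := (abs_nonneg _).trans (hM 0)
  have hC : 0 ≤ C := by
    have h0 := (abs_nonneg (k 0)).trans (hkb 0)
    nlinarith [Real.exp_pos (-(2 * b) * (0:ℝ) ^ 2)]
  have key := hasDerivAt_integral_of_dominated_loc_of_deriv_le
    (F := fun r u => ψ u * k (u - r)) (F' := fun r u => ψ u * -k' (u - r))
    (bound := fun u => M * C * Real.exp (2 * b * (|s| + 1) ^ 2) * Real.exp (-b * u ^ 2))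
    (μ := volume) (x₀ := s) (Metric.ball_mem_nhds s one_pos)
    (Eventually.of_forall fun r =>
      (hψ.mul (hkc.comp (continuous_id.sub continuous_const))).aestronglyMeasurable)
    (param_integrable ψ hψ M hM k hkc b C hb hkb s)
    ((hψ.mul (hk'c.comp (continuous_id.sub continuous_const)).neg).aestronglyMeasurable)
    (Eventually.of_forall fun u r hr => ?_)
    ((integrable_exp_neg_mul_sq hb).const_mul _)
    (Eventually.of_forall fun u r hr => ?_)
  · exact key.2
  · -- bound
    rw [Real.norm_eq_abs, abs_mul, abs_neg]
    have hr2 : r ^ 2 ≤ (|s| + 1) ^ 2 := by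
      have h1 : |r| ≤ |s| + 1 := by
        have := mem_ball_iff_norm.mp hr
        rw [Real.norm_eq_abs] at this
        calc |r| = |s + (r - s)| := by ring_nf
          _ ≤ |s| + |r - s| := abs_add_le _ _
          _ ≤ |s| + 1 := by linarith
      calc r ^ 2 = |r| ^ 2 := (sq_abs r).symm
        _ ≤ (|s| + 1) ^ 2 := by gcongr
    calc |ψ u| * |k' (u - r)| ≤ M * (C * Real.exp (-(2 * b) * (u - r) ^ 2)) :=
          mul_le_mul (hM u) (hk'b _) (abs_nonneg _) hM0
      _ ≤ M * C * (Real.exp (2 * b * (|s| + 1) ^ 2) * Real.exp (-b * u ^ 2)) := by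
          rw [← mul_assoc]
          refine mul_le_mul_of_nonneg_left ?_ (mul_nonneg hM0 hC)
          rw [← Real.exp_add]
          refine Real.exp_le_exp.mpr ?_
          have h2 := shift_ineq (u := u) (s := r) hb.le
          nlinarith
      _ = M * C * Real.exp (2 * b * (|s| + 1) ^ 2) * Real.exp (-b * u ^ 2) := by ring
  · -- differentiability
    have h1 : HasDerivAt (fun r : ℝ => u - r) (-1) r := by
      simpa using (hasDerivAt_id r).const_sub u
    have h2 := ((hk (u - r)).comp r h1).const_mul (ψ u)
    simpa [mul_comm, mul_neg_one] using h2


noncomputable def k0 (t z : ℝ) : ℝ := Real.exp (-z ^ 2 / (2 * t))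
noncomputable def k1 (t z : ℝ) : ℝ := z / t * Real.exp (-z ^ 2 / (2 * t))
noncomputable def k2 (t z : ℝ) : ℝ := (z ^ 2 / t ^ 2 - 1 / t) * Real.exp (-z ^ 2 / (2 * t))
noncomputable def Cb (t : ℝ) : ℝ := 5 + 6 / t

lemma k0_cont (t : ℝ) : Continuous (k0 t) := by
  unfold k0; fun_prop
lemma k1_cont (t : ℝ) : Continuous (k1 t) := by
  unfold k1; fun_prop
lemma k2_cont (t : ℝ) : Continuous (k2 t) := by
  unfold k2; fun_prop

lemma hasDerivAt_k0 {t : ℝ} (ht : 0 < t) (z : ℝ) : HasDerivAt (k0 t) (-k1 t z) z := by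
  have h1 : HasDerivAt (fun z : ℝ => -z ^ 2 / (2 * t)) (-(2 * z) / (2 * t)) z := by
    simpa using ((hasDerivAt_pow 2 z).neg.div_const (2 * t))
  have h2 := h1.exp
  unfold k0 k1
  convert h2 using 1
  field_simp

lemma hasDerivAt_k1 {t : ℝ} (ht : 0 < t) (z : ℝ) : HasDerivAt (k1 t) (-k2 t z) z := by
  have h0 := hasDerivAt_k0 ht z
  have h2 : HasDerivAt (fun z : ℝ => z / t) (1 / t) z := (hasDerivAt_id z).div_const t
  have h3 := h2.mul h0
  have hfun : k1 t = fun z => z / t * k0 t z := rfl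
  rw [hfun]
  refine h3.congr_deriv ?_
  symm
  unfold k0 k1 k2
  field_simp
  ring

lemma exp_le_E {t : ℝ} (ht : 0 < t) (z : ℝ) :
    Real.exp (-z ^ 2 / (2 * t)) ≤ Real.exp (-(2 * (1 / (8 * t))) * z ^ 2) := by
  rw [Real.exp_le_exp]
  have e1 : -(2 * (1 / (8 * t))) * z ^ 2 = -(z ^ 2 / (4 * t)) := by
    field_simp
    ring
  rw [e1, neg_div]
  refine neg_le_neg ?_
  rw [div_le_div_iff₀ (by positivity) (by positivity)]
  nlinarith [sq_nonneg z, ht]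

lemma sq_exp_le_E {t : ℝ} (ht : 0 < t) (z : ℝ) :
    z ^ 2 * Real.exp (-z ^ 2 / (2 * t)) ≤ 4 * t * Real.exp (-(2 * (1 / (8 * t))) * z ^ 2) := by
  have h4 : (0:ℝ) < 4 * t := by positivity
  have ha := Real.add_one_le_exp (z ^ 2 / (4 * t))
  have hb : z ^ 2 ≤ 4 * t * Real.exp (z ^ 2 / (4 * t)) := by
    rw [← div_le_iff₀' h4]
    linarith
  have e2 : z ^ 2 / (4 * t) + -z ^ 2 / (2 * t) = -(2 * (1 / (8 * t))) * z ^ 2 := by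
    field_simp
    ring
  calc z ^ 2 * Real.exp (-z ^ 2 / (2 * t))
      ≤ 4 * t * Real.exp (z ^ 2 / (4 * t)) * Real.exp (-z ^ 2 / (2 * t)) :=
        mul_le_mul_of_nonneg_right hb (Real.exp_pos _).le
    _ = 4 * t * Real.exp (-(2 * (1 / (8 * t))) * z ^ 2) := by
        rw [mul_assoc, ← Real.exp_add, e2]

lemma abs_exp_le_E {t : ℝ} (ht : 0 < t) (z : ℝ) :
    |z| * Real.exp (-z ^ 2 / (2 * t)) ≤ (1 + 4 * t) * Real.exp (-(2 * (1 / (8 * t))) * z ^ 2) := by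
  have h1 : |z| ≤ 1 + z ^ 2 := by nlinarith [sq_nonneg (|z| - 1), sq_abs z]
  have h2 := exp_le_E ht z
  have h3 := sq_exp_le_E ht z
  have h4 : |z| * Real.exp (-z ^ 2 / (2 * t)) ≤ (1 + z ^ 2) * Real.exp (-z ^ 2 / (2 * t)) :=
    mul_le_mul_of_nonneg_right h1 (Real.exp_pos _).le
  nlinarith [Real.exp_pos (-z ^ 2 / (2 * t))]

lemma bound_k0 {t : ℝ} (ht : 0 < t) (z : ℝ) :
    |k0 t z| ≤ Cb t * Real.exp (-(2 * (1 / (8 * t))) * z ^ 2) := by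
  unfold k0 Cb
  rw [abs_of_pos (Real.exp_pos _)]
  have h2 := exp_le_E ht z
  have hE := Real.exp_pos (-(2 * (1 / (8 * t))) * z ^ 2)
  have h6 : (0:ℝ) < 6 / t := by positivity
  nlinarith [mul_pos h6 hE]

lemma bound_k1 {t : ℝ} (ht : 0 < t) (z : ℝ) :
    |k1 t z| ≤ Cb t * Real.exp (-(2 * (1 / (8 * t))) * z ^ 2) := by
  unfold k1 Cb
  rw [abs_mul, abs_of_pos (Real.exp_pos _), abs_div, abs_of_pos ht]
  set E := Real.exp (-(2 * (1 / (8 * t))) * z ^ 2) with hEdef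
  set e := Real.exp (-z ^ 2 / (2 * t)) with hedef
  have hE : 0 < E := Real.exp_pos _
  have he : 0 < e := Real.exp_pos _
  have hti : (0:ℝ) < 1 / t := by positivity
  have h1 : |z| ≤ 1 + z ^ 2 := by nlinarith [sq_nonneg (|z| - 1), sq_abs z]
  have hb : (1 / t) * e ≤ (1 / t) * E := mul_le_mul_of_nonneg_left (exp_le_E ht z) hti.le
  have hc : (1 / t) * (z ^ 2 * e) ≤ (1 / t) * (4 * t * E) :=
    mul_le_mul_of_nonneg_left (sq_exp_le_E ht z) hti.le
  have hd : (1 / t) * (4 * t * E) = 4 * E := by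
    field_simp
  have key : |z| / t * e ≤ (1 / t) * e + (1 / t) * (z ^ 2 * e) := by
    have : |z| / t * e = (1 / t) * (|z| * e) := by ring
    rw [this]
    have h2 : |z| * e ≤ (1 + z ^ 2) * e := mul_le_mul_of_nonneg_right h1 he.le
    calc (1 / t) * (|z| * e) ≤ (1 / t) * ((1 + z ^ 2) * e) :=
          mul_le_mul_of_nonneg_left h2 hti.le
      _ = (1 / t) * e + (1 / t) * (z ^ 2 * e) := by ring
  have hfin : (1 / t) * e + (1 / t) * (z ^ 2 * e) ≤ (5 + 6 / t) * E := by
    rw [hd] at hc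
    have : (1 / t) * E + 4 * E ≤ (5 + 6 / t) * E := by
      have h5 : (1:ℝ) / t * E ≤ 6 / t * E := by
        refine mul_le_mul_of_nonneg_right ?_ hE.le
        gcongr
        norm_num
      nlinarith [hE]
    linarith
  linarith

lemma bound_k2 {t : ℝ} (ht : 0 < t) (z : ℝ) :
    |k2 t z| ≤ Cb t * Real.exp (-(2 * (1 / (8 * t))) * z ^ 2) := by
  unfold k2 Cb
  rw [abs_mul, abs_of_pos (Real.exp_pos _)]
  set E := Real.exp (-(2 * (1 / (8 * t))) * z ^ 2) with hEdef
  set e := Real.exp (-z ^ 2 / (2 * t)) with hedef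
  have hE : 0 < E := Real.exp_pos _
  have he : 0 < e := Real.exp_pos _
  have hti : (0:ℝ) < 1 / t := by positivity
  have ht2i : (0:ℝ) < 1 / t ^ 2 := by positivity
  have htri : |z ^ 2 / t ^ 2 - 1 / t| ≤ z ^ 2 / t ^ 2 + 1 / t := by
    refine (abs_sub _ _).trans ?_
    rw [abs_of_nonneg (by positivity), abs_of_nonneg (by positivity)]
  have hmul : |z ^ 2 / t ^ 2 - 1 / t| * e ≤ (z ^ 2 / t ^ 2 + 1 / t) * e :=
    mul_le_mul_of_nonneg_right htri he.le
  have ha : (1 / t ^ 2) * (z ^ 2 * e) ≤ (1 / t ^ 2) * (4 * t * E) :=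
    mul_le_mul_of_nonneg_left (sq_exp_le_E ht z) ht2i.le
  have ha' : (1 / t ^ 2) * (4 * t * E) = (4 / t) * E := by
    field_simp
  have hb : (1 / t) * e ≤ (1 / t) * E := mul_le_mul_of_nonneg_left (exp_le_E ht z) hti.le
  have hsplit : (z ^ 2 / t ^ 2 + 1 / t) * e = (1 / t ^ 2) * (z ^ 2 * e) + (1 / t) * e := by
    ring
  have hfin : (4 / t) * E + (1 / t) * E ≤ (5 + 6 / t) * E := by
    have h5 : (4:ℝ) / t * E + 1 / t * E = 5 / t * E := by ring
    rw [h5]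
    have h6 : (5:ℝ) / t * E ≤ 6 / t * E := by
      refine mul_le_mul_of_nonneg_right ?_ hE.le
      gcongr
      norm_num
    nlinarith [hE]
  rw [ha'] at ha
  linarith [hmul, hsplit ▸ (by linarith [ha, hb] :
    (z ^ 2 / t ^ 2 + 1 / t) * e ≤ (4 / t) * E + (1 / t) * E)]


lemma hasDerivAt_G {t : ℝ} (ht : 0 < t) (ψ : ℝ → ℝ) (hψ : Continuous ψ) (M : ℝ)
    (hM : ∀ u, |ψ u| ≤ M) (s : ℝ) :
    HasDerivAt (fun r => ∫ u, ψ u * k0 t (u - r)) (∫ u, ψ u * k1 t (u - s)) s := by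
  have hb : (0:ℝ) < 1 / (8 * t) := by positivity
  have h := param_hasDerivAt ψ hψ M hM (k0 t) (fun z => -k1 t z)
    (fun z => hasDerivAt_k0 ht z) ((k1_cont t).neg) (1 / (8 * t)) (Cb t) hb
    (bound_k0 ht) (fun z => by rw [abs_neg]; exact bound_k1 ht z) s
  simpa using h

lemma hasDerivAt_G1 {t : ℝ} (ht : 0 < t) (ψ : ℝ → ℝ) (hψ : Continuous ψ) (M : ℝ)
    (hM : ∀ u, |ψ u| ≤ M) (s : ℝ) :
    HasDerivAt (fun r => ∫ u, ψ u * k1 t (u - r)) (∫ u, ψ u * k2 t (u - s)) s := by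
  have hb : (0:ℝ) < 1 / (8 * t) := by positivity
  have h := param_hasDerivAt ψ hψ M hM (k1 t) (fun z => -k2 t z)
    (fun z => hasDerivAt_k1 ht z) ((k2_cont t).neg) (1 / (8 * t)) (Cb t) hb
    (bound_k1 ht) (fun z => by rw [abs_neg]; exact bound_k2 ht z) s
  simpa using h

lemma integral_gaussianReal_eq {t : ℝ} (ht : 0 < t) (g : ℝ → ℝ) :
    ∫ w, g w ∂(gaussianReal 0 ⟨t, ht.le⟩)
      = ∫ w, gaussianPDFReal 0 ⟨t, ht.le⟩ w * g w := by
  have hv0 : (⟨t, ht.le⟩ : NNReal) ≠ 0 := by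
    intro h
    exact ht.ne' (congrArg NNReal.toReal h)
  rw [gaussianReal_of_var_ne_zero 0 hv0]
  have h1 : (volume.withDensity (gaussianPDF 0 ⟨t, ht.le⟩))
      = volume.withDensity
        (fun w => (((gaussianPDFReal 0 ⟨t, ht.le⟩ w).toNNReal : ℝ≥0) : ℝ≥0∞)) := rfl
  rw [h1, integral_withDensity_eq_integral_smul
    (measurable_gaussianPDFReal 0 ⟨t, ht.le⟩).real_toNNReal g]
  congr 1
  funext w
  rw [NNReal.smul_def, smul_eq_mul]
  exact congrArg (· * g w) (Real.coe_toNNReal _ (gaussianPDFReal_nonneg 0 _ w))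

lemma gaussianPDFReal_eq {t : ℝ} (ht : 0 < t) (w : ℝ) :
    gaussianPDFReal 0 ⟨t, ht.le⟩ w = (Real.sqrt (2 * π * t))⁻¹ * Real.exp (-w ^ 2 / (2 * t)) := by
  simp [gaussianPDFReal]
  rfl

end LognormalAux

open LognormalAux


/-- Second-order automatic differentiation weight for log-normal dynamics: with
`X̄ˣ_t = -c₁/c₂ + (c₁/c₂ + x) exp(-c₂²t/2 + c₂ W_t)` and `W_t ∼ N(0,t)`,
for bounded continuous `φ`, the map `x ↦ E[φ(X̄ˣ_t)]` is twice differentiable at `x` and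
`d²/dx² E[φ(X̄ˣ_t)] = E[φ(X̄ˣ_t) (c₁+c₂x)⁻² (-c₂ W_t/t + (W_t² - t)/t²)]`. -/
theorem lognormal_ibp_second_order
    (t c1 c2 x : ℝ) (ht : 0 < t) (hc2 : c2 ≠ 0) (hx : c1 + c2 * x ≠ 0)
    (φ : ℝ → ℝ) (hφc : Continuous φ) (hφb : ∃ M, ∀ y, |φ y| ≤ M)
    (X : ℝ → ℝ → ℝ)
    (hX : ∀ y w, X y w = -(c1 / c2) + (c1 / c2 + y) * Real.exp (-(c2 ^ 2 / 2) * t + c2 * w)) :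
    DifferentiableAt ℝ (fun y => ∫ w, φ (X y w) ∂(gaussianReal 0 ⟨t, ht.le⟩)) x ∧
    HasDerivAt (fun y => deriv (fun z => ∫ w, φ (X z w) ∂(gaussianReal 0 ⟨t, ht.le⟩)) y)
      (∫ w, φ (X x w) * (1 / (c1 + c2 * x) ^ 2) *
        (-c2 * (w / t) + (w ^ 2 - t) / t ^ 2) ∂(gaussianReal 0 ⟨t, ht.le⟩)) x := by
  obtain ⟨M, hM⟩ := hφb
  simp only [hX]
  set ψ : ℝ → ℝ :=
    fun u => φ (-(c1 / c2) + (c1 / c2 + x) * Real.exp (-(c2 ^ 2 / 2) * t + c2 * u)) with hψdef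
  have hψ : Continuous ψ := by
    refine hφc.comp ?_
    fun_prop
  have hMψ : ∀ u, |ψ u| ≤ M := fun u => hM _
  set ρ : ℝ := (Real.sqrt (2 * π * t))⁻¹ with hρdef
  set h : ℝ → ℝ := fun y => Real.log ((c1 + c2 * y) / (c1 + c2 * x)) / c2 with hhdef
  set U : Set ℝ := {y | 0 < (c1 + c2 * y) / (c1 + c2 * x)} with hUdef
  have hUopen : IsOpen U := isOpen_lt continuous_const (by fun_prop)
  have hxU : x ∈ U := by
    show 0 < (c1 + c2 * x) / (c1 + c2 * x)
    rw [div_self hx]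
    exact one_pos
  have hyne : ∀ y ∈ U, c1 + c2 * y ≠ 0 := by
    intro y hy h0
    have hr : 0 < (c1 + c2 * y) / (c1 + c2 * x) := hy
    rw [h0, zero_div] at hr
    exact lt_irrefl 0 hr
  -- shift identity
  have hshift : ∀ y ∈ U, ∀ w : ℝ,
      (-(c1 / c2) + (c1 / c2 + y) * Real.exp (-(c2 ^ 2 / 2) * t + c2 * w))
        = -(c1 / c2) + (c1 / c2 + x) * Real.exp (-(c2 ^ 2 / 2) * t + c2 * (w + h y)) := by
    intro y hy w
    have hr : 0 < (c1 + c2 * y) / (c1 + c2 * x) := hy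
    congr 1
    have hc2h : c2 * h y = Real.log ((c1 + c2 * y) / (c1 + c2 * x)) := by
      rw [hhdef]
      field_simp
    have he : -(c2 ^ 2 / 2) * t + c2 * (w + h y)
        = (-(c2 ^ 2 / 2) * t + c2 * w) + c2 * h y := by ring
    have hexp : Real.exp (-(c2 ^ 2 / 2) * t + c2 * (w + h y))
        = Real.exp (-(c2 ^ 2 / 2) * t + c2 * w) * ((c1 + c2 * y) / (c1 + c2 * x)) := by
      rw [he, Real.exp_add, hc2h, Real.exp_log hr]
    rw [hexp]
    field_simp
  -- representation on U
  have hrep : ∀ y ∈ U,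
      (∫ w, φ (-(c1 / c2) + (c1 / c2 + y) * Real.exp (-(c2 ^ 2 / 2) * t + c2 * w))
        ∂(gaussianReal 0 ⟨t, ht.le⟩))
      = ρ * ∫ u, ψ u * k0 t (u - h y) := by
    intro y hy
    rw [integral_gaussianReal_eq ht]
    have step1 : (fun w => gaussianPDFReal 0 ⟨t, ht.le⟩ w *
        φ (-(c1 / c2) + (c1 / c2 + y) * Real.exp (-(c2 ^ 2 / 2) * t + c2 * w)))
        = fun w => ρ * (ψ (w + h y) * k0 t w) := by
      funext w
      rw [gaussianPDFReal_eq ht w, hshift y hy w, hψdef]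
      show (Real.sqrt (2 * π * t))⁻¹ * Real.exp (-w ^ 2 / (2 * t)) * _ = _
      simp only [k0]
      ring
    rw [step1, integral_const_mul]
    congr 1
    rw [← integral_add_right_eq_self (μ := volume) (fun u => ψ u * k0 t (u - h y)) (h y)]
    congr 1
    funext w
    rw [add_sub_cancel_right]
  -- derivative of h on U
  have hhy : ∀ y ∈ U, HasDerivAt h (c1 + c2 * y)⁻¹ y := by
    intro y hy
    have hr : 0 < (c1 + c2 * y) / (c1 + c2 * x) := hy
    have hlin : HasDerivAt (fun y : ℝ => c1 + c2 * y) c2 y := by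
      simpa using ((hasDerivAt_id y).const_mul c2).const_add c1
    have hinner : HasDerivAt (fun y : ℝ => (c1 + c2 * y) / (c1 + c2 * x))
        (c2 / (c1 + c2 * x)) y := hlin.div_const _
    have hlog := (hinner.log (ne_of_gt hr)).div_const c2
    have hval : c2 / (c1 + c2 * x) / ((c1 + c2 * y) / (c1 + c2 * x)) / c2
        = (c1 + c2 * y)⁻¹ := by
      have hy0 : c1 + c2 * y ≠ 0 := hyne y hy
      field_simp
    rw [← hval]
    exact hlog
  -- derivative of goal function on U
  have hgy : ∀ y ∈ U, HasDerivAt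
      (fun y => ∫ w, φ (-(c1 / c2) + (c1 / c2 + y) * Real.exp (-(c2 ^ 2 / 2) * t + c2 * w))
        ∂(gaussianReal 0 ⟨t, ht.le⟩))
      (ρ * ((∫ u, ψ u * k1 t (u - h y)) * (c1 + c2 * y)⁻¹)) y := by
    intro y hy
    have hcomp := (hasDerivAt_G ht ψ hψ M hMψ (h y)).comp y (hhy y hy)
    have hcm := hcomp.const_mul ρ
    refine hcm.congr_of_eventuallyEq ?_
    filter_upwards [hUopen.mem_nhds hy] with z hz
    exact hrep z hz
  constructor
  · exact (hgy x hxU).differentiableAt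
  · -- second derivative
    have hDeq : (fun y => deriv
        (fun z => ∫ w, φ (-(c1 / c2) + (c1 / c2 + z) * Real.exp (-(c2 ^ 2 / 2) * t + c2 * w))
          ∂(gaussianReal 0 ⟨t, ht.le⟩)) y)
        =ᶠ[nhds x] fun y => ρ * ((∫ u, ψ u * k1 t (u - h y)) * (c1 + c2 * y)⁻¹) := by
      filter_upwards [hUopen.mem_nhds hxU] with z hz
      exact (hgy z hz).deriv
    have hG1comp := (hasDerivAt_G1 ht ψ hψ M hMψ (h x)).comp x (hhy x hxU)
    have hlin : HasDerivAt (fun y : ℝ => c1 + c2 * y) c2 x := by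
      simpa using ((hasDerivAt_id x).const_mul c2).const_add c1
    have hinv : HasDerivAt (fun y : ℝ => (c1 + c2 * y)⁻¹)
        (-c2 / (c1 + c2 * x) ^ 2) x := by
      exact hlin.inv hx
    have hmul := (hG1comp.mul hinv).const_mul ρ
    have hfin := hmul.congr_of_eventuallyEq hDeq
    have hx0 : h x = 0 := by
      rw [hhdef]
      simp [div_self hx]
    have hb8 : (0:ℝ) < 1 / (8 * t) := by positivity
    have hint1 : Integrable (fun w => ψ w * k1 t (w - 0)) :=
      param_integrable ψ hψ M hMψ (k1 t) (k1_cont t) (1 / (8 * t)) (Cb t) hb8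
        (bound_k1 ht) 0
    have hint2 : Integrable (fun w => ψ w * k2 t (w - 0)) :=
      param_integrable ψ hψ M hMψ (k2 t) (k2_cont t) (1 / (8 * t)) (Cb t) hb8
        (bound_k2 ht) 0
    refine hfin.congr_deriv ?_
    symm
    rw [integral_gaussianReal_eq ht]
    have hptw : (fun w => gaussianPDFReal 0 ⟨t, ht.le⟩ w *
        (φ (-(c1 / c2) + (c1 / c2 + x) * Real.exp (-(c2 ^ 2 / 2) * t + c2 * w)) *
          (1 / (c1 + c2 * x) ^ 2) * (-c2 * (w / t) + (w ^ 2 - t) / t ^ 2)))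
        = fun w => (ρ * (c1 + c2 * x)⁻¹ * (c1 + c2 * x)⁻¹) * (ψ w * k2 t (w - 0))
            + (ρ * (-c2 / (c1 + c2 * x) ^ 2)) * (ψ w * k1 t (w - 0)) := by
      funext w
      rw [gaussianPDFReal_eq ht w, hψdef]
      simp only [k1, k2, sub_zero]
      have hw : (w ^ 2 - t) / t ^ 2 = w ^ 2 / t ^ 2 - 1 / t := by
        field_simp
      have hc : (1:ℝ) / (c1 + c2 * x) ^ 2 = (c1 + c2 * x)⁻¹ * (c1 + c2 * x)⁻¹ := by
        rw [one_div, sq, mul_inv]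
      have hc' : -c2 / (c1 + c2 * x) ^ 2 = -c2 * ((c1 + c2 * x)⁻¹ * (c1 + c2 * x)⁻¹) := by
        rw [div_eq_mul_inv, sq, mul_inv]
      rw [hw, hc, hc']
      ring
    rw [hptw, integral_add (hint2.const_mul _) (hint1.const_mul _),
      integral_const_mul, integral_const_mul]
    simp only [Function.comp_apply]
    rw [hx0]
    ring
end

section
/- Let $t \in (0,T]$, $c_1, c_2 \in \mathbb{R}$, $x \in \mathbb{R}$, and $\phi \in C^2_b(\mathbb{R})$ (bounded with bounded first and second derivatives). Let $W_t \sim \mathcal{N}(0,t)$ and define $\overline{X}^x_t := -\frac{c_1}{c_2} + (\frac{c_1}{c_2}+x)e^{-c_2^2 t/2 + c_2 W_t}$ if $c_2 \neq 0$ and $\overline{X}^x_t := x + c_1 W_t$ if $c_2 = 0$. Then there exists a constant $C$ depending only on $T$, $c_2$, and the bounds on $\phi'$, such that for all $(t, x) \in (0,T] \times \mathbb{R}$, $\mathbb{E}\Big[\big(\phi(\overline{X}^x_t) - \phi(x)\big)^2 \big(\tfrac{W_t}{t}\big)^2\Big] \le C\,(c_1 + c_2 x)^2$. -/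
open MeasureTheory ProbabilityTheory Real Filter Set


lemma my_tendsto_pow_mul_exp {b : ℝ} (hb : 0 < b) (n : ℕ) :
    Tendsto (fun x : ℝ => x ^ n * Real.exp (-b * x ^ 2)) atTop (nhds 0) := by
  have h := (rpow_mul_exp_neg_mul_sq_isLittleO_exp_neg hb (n : ℝ)).isBigO.trans_tendsto ?_
  · refine h.congr' ?_
    filter_upwards with x
    rw [Real.rpow_natCast]
  · have : Tendsto (fun x : ℝ => -(1/2) * x) atTop atBot := by
      apply Tendsto.const_mul_atTop_of_neg (by norm_num) tendsto_id
    exact Real.tendsto_exp_atBot.comp this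

lemma my_tendsto_pow_mul_exp_bot {b : ℝ} (hb : 0 < b) (n : ℕ) :
    Tendsto (fun x : ℝ => x ^ n * Real.exp (-b * x ^ 2)) atBot (nhds 0) := by
  have h := ((my_tendsto_pow_mul_exp hb n).comp tendsto_neg_atBot_atTop).const_mul ((-1 : ℝ) ^ n)
  rw [mul_zero] at h
  refine h.congr ?_
  intro x
  simp only [Function.comp]
  rw [neg_pow, neg_pow]
  ring_nf
  rw [mul_comm n 2, pow_mul]
  norm_num

lemma my_integral_deriv_eq_zero {g g' : ℝ → ℝ} (hg : ∀ x, HasDerivAt g (g' x) x)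
    (hint : Integrable g') (htop : Tendsto g atTop (nhds 0)) (hbot : Tendsto g atBot (nhds 0)) :
    ∫ x : ℝ, g' x = 0 := by
  have h1 : ∫ x in Iic (0:ℝ), g' x = g 0 - 0 :=
    integral_Iic_of_hasDerivAt_of_tendsto (hg 0).continuousAt.continuousWithinAt
      (fun x _ => hg x) hint.integrableOn hbot
  have h2 : ∫ x in Ioi (0:ℝ), g' x = 0 - g 0 :=
    integral_Ioi_of_hasDerivAt_of_tendsto (hg 0).continuousAt.continuousWithinAt
      (fun x _ => hg x) hint.integrableOn htop
  rw [← intervalIntegral.integral_Iic_add_Ioi hint.integrableOn hint.integrableOn, h1, h2]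
  ring

lemma my_integrable_pow_exp {b : ℝ} (hb : 0 < b) (n : ℕ) :
    Integrable (fun x : ℝ => x ^ n * Real.exp (-b * x ^ 2)) := by
  have h := integrable_rpow_mul_exp_neg_mul_sq hb
    (s := (n : ℝ)) (lt_of_lt_of_le neg_one_lt_zero (Nat.cast_nonneg n))
  refine h.congr ?_
  filter_upwards with x
  rw [Real.rpow_natCast]

lemma my_J1 {b : ℝ} : ∫ x : ℝ, x * Real.exp (-b * x ^ 2) = 0 := by
  have h := MeasureTheory.integral_neg_eq_self (fun x : ℝ => x * Real.exp (-b * x ^ 2)) volume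
  simp only [neg_sq, neg_mul] at h ⊢
  rw [integral_neg] at h
  linarith

lemma my_J2 {b : ℝ} (hb : 0 < b) :
    ∫ x : ℝ, x ^ 2 * Real.exp (-b * x ^ 2) = (2 * b)⁻¹ * Real.sqrt (π / b) := by
  have hg : ∀ x : ℝ, HasDerivAt (fun x : ℝ => x * Real.exp (-b * x ^ 2))
      (Real.exp (-b * x ^ 2) - 2 * b * (x ^ 2 * Real.exp (-b * x ^ 2))) x := by
    intro x
    have h1 : HasDerivAt (fun x : ℝ => -b * x ^ 2) (-b * (2 * x)) x := by
      simpa using ((hasDerivAt_pow 2 x).const_mul (-b))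
    have h3 := ((hasDerivAt_id x).mul h1.exp)
    refine h3.congr_deriv ?_
    simp only [id_eq]
    ring
  have hsub : Integrable (fun x : ℝ =>
      Real.exp (-b * x ^ 2) - 2 * b * (x ^ 2 * Real.exp (-b * x ^ 2))) :=
    (integrable_exp_neg_mul_sq hb).sub ((my_integrable_pow_exp hb 2).const_mul (2*b))
  have h0 := my_integral_deriv_eq_zero hg hsub
    (by simpa using my_tendsto_pow_mul_exp hb 1)
    (by simpa using my_tendsto_pow_mul_exp_bot hb 1)
  rw [integral_sub (integrable_exp_neg_mul_sq hb) ((my_integrable_pow_exp hb 2).const_mul (2*b)),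
    integral_const_mul, integral_gaussian] at h0
  have h2b : (2 * b) ≠ 0 := by positivity
  field_simp at h0 ⊢
  linarith

lemma my_J4 {b : ℝ} (hb : 0 < b) :
    ∫ x : ℝ, x ^ 4 * Real.exp (-b * x ^ 2)
      = 3 * ((2 * b)⁻¹ * ((2 * b)⁻¹ * Real.sqrt (π / b))) := by
  have hg : ∀ x : ℝ, HasDerivAt (fun x : ℝ => x ^ 3 * Real.exp (-b * x ^ 2))
      (3 * (x ^ 2 * Real.exp (-b * x ^ 2)) - 2 * b * (x ^ 4 * Real.exp (-b * x ^ 2))) x := by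
    intro x
    have h1 : HasDerivAt (fun x : ℝ => -b * x ^ 2) (-b * (2 * x)) x := by
      simpa using ((hasDerivAt_pow 2 x).const_mul (-b))
    have h3 := ((hasDerivAt_pow 3 x).mul h1.exp)
    refine h3.congr_deriv ?_
    ring
  have hsub : Integrable (fun x : ℝ =>
      3 * (x ^ 2 * Real.exp (-b * x ^ 2)) - 2 * b * (x ^ 4 * Real.exp (-b * x ^ 2))) :=
    ((my_integrable_pow_exp hb 2).const_mul 3).sub ((my_integrable_pow_exp hb 4).const_mul (2*b))
  have h0 := my_integral_deriv_eq_zero hg hsub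
    (by simpa using my_tendsto_pow_mul_exp hb 3)
    (by simpa using my_tendsto_pow_mul_exp_bot hb 3)
  rw [integral_sub ((my_integrable_pow_exp hb 2).const_mul 3)
      ((my_integrable_pow_exp hb 4).const_mul (2*b)),
    integral_const_mul, integral_const_mul, my_J2 hb] at h0
  have h2b : (2 * b) ≠ 0 := by positivity
  field_simp at h0 ⊢
  linarith

lemma my_shifted2_int {b : ℝ} (hb : 0 < b) (m : ℝ) :
    Integrable (fun x : ℝ => x ^ 2 * Real.exp (-b * (x - m) ^ 2)) := by
  have hI1 : Integrable (fun u : ℝ => u * Real.exp (-b * u ^ 2)) := by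
    simpa using my_integrable_pow_exp hb 1
  have h0 : Integrable (fun u : ℝ => (u + m) ^ 2 * Real.exp (-b * u ^ 2)) := by
    have := ((my_integrable_pow_exp hb 2).add
      ((hI1.const_mul (2*m)).add
        ((integrable_exp_neg_mul_sq hb).const_mul (m^2))))
    refine this.congr ?_
    filter_upwards with u
    simp only [Pi.add_apply]
    ring
  have := h0.comp_sub_right (g := m)
  refine this.congr ?_
  filter_upwards with x
  ring_nf

lemma my_shifted2_val {b : ℝ} (hb : 0 < b) (m : ℝ) :
    ∫ x : ℝ, x ^ 2 * Real.exp (-b * (x - m) ^ 2)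
      = ((2 * b)⁻¹ + m ^ 2) * Real.sqrt (π / b) := by
  have hI1 : Integrable (fun u : ℝ => u * Real.exp (-b * u ^ 2)) := by
    simpa using my_integrable_pow_exp hb 1
  have hIa : Integrable (fun u : ℝ =>
      (2*m) * (u * Real.exp (-b * u ^ 2)) + m^2 * Real.exp (-b * u ^ 2)) := by
    exact (hI1.const_mul (2*m)).add ((integrable_exp_neg_mul_sq hb).const_mul (m^2))
  have hfun : (fun x : ℝ => x ^ 2 * Real.exp (-b * (x - m) ^ 2))
      = fun x : ℝ => ((x - m) + m) ^ 2 * Real.exp (-b * (x - m) ^ 2) := by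
    funext x; ring_nf
  rw [hfun]
  rw [MeasureTheory.integral_sub_right_eq_self (fun u : ℝ => (u + m) ^ 2 * Real.exp (-b * u ^ 2)) m]
  have hsplit : (fun u : ℝ => (u + m) ^ 2 * Real.exp (-b * u ^ 2))
      = fun u : ℝ => u ^ 2 * Real.exp (-b * u ^ 2)
        + ((2*m) * (u * Real.exp (-b * u ^ 2)) + m^2 * Real.exp (-b * u ^ 2)) := by
    funext u; ring
  rw [hsplit, integral_add (my_integrable_pow_exp hb 2) hIa,
    integral_add (hI1.const_mul (2*m)) ((integrable_exp_neg_mul_sq hb).const_mul (m^2)),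
    integral_const_mul, integral_const_mul, my_J2 hb, my_J1, integral_gaussian]
  ring

lemma my_pdf_integral (t : ℝ) (ht : 0 < t) (f : ℝ → ℝ) :
    ∫ w, f w ∂(gaussianReal 0 ⟨t, ht.le⟩)
      = ∫ w, gaussianPDFReal 0 ⟨t, ht.le⟩ w * f w := by
  have hv : (⟨t, ht.le⟩ : NNReal) ≠ 0 := by
    intro h
    exact ht.ne' (congrArg NNReal.toReal h)
  rw [gaussianReal_of_var_ne_zero _ hv]
  have hd : (volume : Measure ℝ).withDensity (gaussianPDF 0 ⟨t, ht.le⟩)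
      = (volume : Measure ℝ).withDensity
        (fun x => ((Real.toNNReal (gaussianPDFReal 0 ⟨t, ht.le⟩ x) : NNReal) : ENNReal)) := rfl
  rw [hd, integral_withDensity_eq_integral_smul
    ((measurable_gaussianPDFReal 0 ⟨t, ht.le⟩).real_toNNReal) f]
  congr 1
  funext w
  rw [NNReal.smul_def, Real.coe_toNNReal _ (gaussianPDFReal_nonneg 0 ⟨t, ht.le⟩ w)]
  rfl

lemma my_pdf_integrable_iff (t : ℝ) (ht : 0 < t) (f : ℝ → ℝ) :
    Integrable f (gaussianReal 0 ⟨t, ht.le⟩)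
      ↔ Integrable (fun w => gaussianPDFReal 0 ⟨t, ht.le⟩ w * f w) volume := by
  have hv : (⟨t, ht.le⟩ : NNReal) ≠ 0 := by
    intro h
    exact ht.ne' (congrArg NNReal.toReal h)
  rw [gaussianReal_of_var_ne_zero _ hv]
  have hd : (volume : Measure ℝ).withDensity (gaussianPDF 0 ⟨t, ht.le⟩)
      = (volume : Measure ℝ).withDensity
        (fun x => ((Real.toNNReal (gaussianPDFReal 0 ⟨t, ht.le⟩ x) : NNReal) : ENNReal)) := rfl
  rw [hd, integrable_withDensity_iff_integrable_smul
    ((measurable_gaussianPDFReal 0 ⟨t, ht.le⟩).real_toNNReal)]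
  constructor <;> intro h <;> refine h.congr ?_ <;> filter_upwards with w <;>
    simp [NNReal.smul_def, smul_eq_mul,
      Real.coe_toNNReal _ (gaussianPDFReal_nonneg 0 ⟨t, ht.le⟩ w)]

lemma my_tilt_eq (t : ℝ) (ht : 0 < t) (l : ℝ) (w : ℝ) :
    gaussianPDFReal 0 ⟨t, ht.le⟩ w * (Real.exp (l * w) * w ^ 2)
      = (Real.sqrt (2 * π * t))⁻¹ * Real.exp (l ^ 2 * t / 2)
        * (w ^ 2 * Real.exp (-(2*t)⁻¹ * (w - l*t) ^ 2)) := by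
  simp only [gaussianPDFReal, NNReal.coe_mk, sub_zero]
  erw [NNReal.coe_mk]
  have hexp : Real.exp (-w ^ 2 / (2*t)) * Real.exp (l*w)
      = Real.exp (l ^ 2 * t / 2) * Real.exp (-(2*t)⁻¹ * (w - l*t) ^ 2) := by
    rw [← Real.exp_add, ← Real.exp_add]
    congr 1
    field_simp
    ring
  linear_combination ((Real.sqrt (2 * π * t))⁻¹ * w ^ 2) * hexp

lemma my_gauss_tilt_int (t : ℝ) (ht : 0 < t) (l : ℝ) :
    Integrable (fun w => Real.exp (l * w) * w ^ 2) (gaussianReal 0 ⟨t, ht.le⟩) := by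
  rw [my_pdf_integrable_iff t ht]
  have hb : (0:ℝ) < (2*t)⁻¹ := by positivity
  have := (my_shifted2_int hb (l*t)).const_mul
    ((Real.sqrt (2 * π * t))⁻¹ * Real.exp (l ^ 2 * t / 2))
  refine this.congr ?_
  filter_upwards with w
  rw [my_tilt_eq t ht l w]
  try ring

lemma my_gauss_tilt (t : ℝ) (ht : 0 < t) (l : ℝ) :
    ∫ w, Real.exp (l * w) * w ^ 2 ∂(gaussianReal 0 ⟨t, ht.le⟩)
      = Real.exp (l ^ 2 * t / 2) * (t + l ^ 2 * t ^ 2) := by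
  rw [my_pdf_integral t ht]
  have hb : (0:ℝ) < (2*t)⁻¹ := by positivity
  have hfun : (fun w => gaussianPDFReal 0 ⟨t, ht.le⟩ w * (Real.exp (l * w) * w ^ 2))
      = fun w => ((Real.sqrt (2 * π * t))⁻¹ * Real.exp (l ^ 2 * t / 2))
        * (w ^ 2 * Real.exp (-(2*t)⁻¹ * (w - l*t) ^ 2)) := by
    funext w
    rw [my_tilt_eq t ht l w]
    try ring
  rw [hfun, integral_const_mul, my_shifted2_val hb (l*t)]
  have h1 : ((2 * (2*t)⁻¹)⁻¹ : ℝ) = t := by field_simp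
  have h2 : (π / ((2*t)⁻¹) : ℝ) = 2 * π * t := by field_simp
  rw [h1, h2]
  have h3 : Real.sqrt (2 * π * t) ≠ 0 := by
    refine (Real.sqrt_ne_zero ?_).mpr ?_ <;> positivity
  field_simp
  try ring

lemma my_gauss4_int (t : ℝ) (ht : 0 < t) :
    Integrable (fun w => w ^ 4) (gaussianReal 0 ⟨t, ht.le⟩) := by
  rw [my_pdf_integrable_iff t ht]
  have hb : (0:ℝ) < (2*t)⁻¹ := by positivity
  have := (my_integrable_pow_exp hb 4).const_mul ((Real.sqrt (2 * π * t))⁻¹)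
  refine this.congr ?_
  filter_upwards with w
  simp only [gaussianPDFReal, NNReal.coe_mk, sub_zero]
  erw [NNReal.coe_mk]
  rw [show (-w ^ 2 / (2*t) : ℝ) = -(2*t)⁻¹ * w ^ 2 by field_simp]
  ring

lemma my_gauss4 (t : ℝ) (ht : 0 < t) :
    ∫ w, w ^ 4 ∂(gaussianReal 0 ⟨t, ht.le⟩) = 3 * t ^ 2 := by
  rw [my_pdf_integral t ht]
  have hb : (0:ℝ) < (2*t)⁻¹ := by positivity
  have hfun : (fun w => gaussianPDFReal 0 ⟨t, ht.le⟩ w * w ^ 4)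
      = fun w => (Real.sqrt (2 * π * t))⁻¹ * (w ^ 4 * Real.exp (-(2*t)⁻¹ * w ^ 2)) := by
    funext w
    simp only [gaussianPDFReal, NNReal.coe_mk, sub_zero]
    erw [NNReal.coe_mk]
    rw [show (-w ^ 2 / (2*t) : ℝ) = -(2*t)⁻¹ * w ^ 2 by field_simp]
    ring
  rw [hfun, integral_const_mul, my_J4 hb]
  have h1 : ((2 * (2*t)⁻¹)⁻¹ : ℝ) = t := by field_simp
  have h2 : (π / ((2*t)⁻¹) : ℝ) = 2 * π * t := by field_simp
  rw [h1, h2]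
  have h3 : Real.sqrt (2 * π * t) ≠ 0 := by
    refine (Real.sqrt_ne_zero ?_).mpr ?_ <;> positivity
  field_simp
  try ring

lemma my_key (T : ℝ) (b : ℝ) (t : ℝ) (ht : 0 < t) (htT : t ≤ T) :
    Integrable (fun w => (Real.exp (-(b^2/2)*t + b*w) - 1)^2 * (w/t)^2)
        (gaussianReal 0 ⟨t, ht.le⟩)
    ∧ ∫ w, (Real.exp (-(b^2/2)*t + b*w) - 1)^2 * (w/t)^2 ∂(gaussianReal 0 ⟨t, ht.le⟩)
      ≤ 5 * b^2 * Real.exp (b^2*T) := by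
  have hpt : ∀ w : ℝ, (Real.exp (-(b^2/2)*t + b*w) - 1)^2 * (w/t)^2
      = (t^2)⁻¹ * (Real.exp (2*(-(b^2/2)*t)) * (Real.exp ((2*b)*w) * w^2)
        - 2*Real.exp (-(b^2/2)*t) * (Real.exp (b*w) * w^2) + Real.exp (0*w) * w^2) := by
    intro w
    have h1 : Real.exp (-(b^2/2)*t + b*w) = Real.exp (-(b^2/2)*t) * Real.exp (b*w) :=
      Real.exp_add _ _
    have h2 : Real.exp ((2*b)*w) = Real.exp (b*w) * Real.exp (b*w) := by
      rw [← Real.exp_add]; ring_nf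
    rw [h1, h2, zero_mul, Real.exp_zero,
      show (2*(-(b^2/2)*t) : ℝ) = (-(b^2/2)*t) + (-(b^2/2)*t) by ring, Real.exp_add]
    field_simp
    ring
  have I0 : Integrable (fun w => Real.exp (0*w) * w^2) (gaussianReal 0 ⟨t, ht.le⟩) :=
    my_gauss_tilt_int t ht 0
  have I1 : Integrable (fun w => Real.exp (b*w) * w^2) (gaussianReal 0 ⟨t, ht.le⟩) :=
    my_gauss_tilt_int t ht b
  have I2 : Integrable (fun w => Real.exp ((2*b)*w) * w^2) (gaussianReal 0 ⟨t, ht.le⟩) :=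
    my_gauss_tilt_int t ht (2*b)
  have hIsub : Integrable (fun w => Real.exp (2*(-(b^2/2)*t)) * (Real.exp ((2*b)*w) * w^2)
        - 2*Real.exp (-(b^2/2)*t) * (Real.exp (b*w) * w^2)) (gaussianReal 0 ⟨t, ht.le⟩) := by
    exact (I2.const_mul _).sub (I1.const_mul _)
  have hIsum : Integrable (fun w => Real.exp (2*(-(b^2/2)*t)) * (Real.exp ((2*b)*w) * w^2)
        - 2*Real.exp (-(b^2/2)*t) * (Real.exp (b*w) * w^2) + Real.exp (0*w) * w^2)
      (gaussianReal 0 ⟨t, ht.le⟩) := by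
    exact hIsub.add I0
  have hInt : Integrable (fun w => (Real.exp (-(b^2/2)*t + b*w) - 1)^2 * (w/t)^2)
      (gaussianReal 0 ⟨t, ht.le⟩) := by
    have := hIsum.const_mul ((t^2)⁻¹ : ℝ)
    refine this.congr ?_
    filter_upwards with w
    rw [hpt w]
  refine ⟨hInt, ?_⟩
  have hval : ∫ w, (Real.exp (-(b^2/2)*t + b*w) - 1)^2 * (w/t)^2 ∂(gaussianReal 0 ⟨t, ht.le⟩)
      = (t^2)⁻¹ * (Real.exp (2*(-(b^2/2)*t)) * (Real.exp ((2*b)^2*t/2) * (t + (2*b)^2*t^2))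
        - 2*Real.exp (-(b^2/2)*t) * (Real.exp (b^2*t/2) * (t + b^2*t^2))
        + Real.exp (0^2*t/2) * (t + 0^2*t^2)) := by
    rw [show (fun w => (Real.exp (-(b^2/2)*t + b*w) - 1)^2 * (w/t)^2)
        = fun w => (t^2)⁻¹ * (Real.exp (2*(-(b^2/2)*t)) * (Real.exp ((2*b)*w) * w^2)
          - 2*Real.exp (-(b^2/2)*t) * (Real.exp (b*w) * w^2) + Real.exp (0*w) * w^2)
      from funext hpt]
    rw [integral_const_mul, integral_add hIsub I0,
      integral_sub (I2.const_mul _) (I1.const_mul _), integral_const_mul, integral_const_mul,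
      my_gauss_tilt t ht (2*b), my_gauss_tilt t ht b, my_gauss_tilt t ht 0]
  have he1 : Real.exp (2*(-(b^2/2)*t)) * Real.exp ((2*b)^2*t/2) = Real.exp (b^2*t) := by
    rw [← Real.exp_add]; congr 1; ring
  have he2 : Real.exp (-(b^2/2)*t) * Real.exp (b^2*t/2) = 1 := by
    rw [← Real.exp_add, show (-(b^2/2)*t + b^2*t/2 : ℝ) = 0 by ring, Real.exp_zero]
  have hclean : ∫ w, (Real.exp (-(b^2/2)*t + b*w) - 1)^2 * (w/t)^2 ∂(gaussianReal 0 ⟨t, ht.le⟩)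
      = (t^2)⁻¹ * (Real.exp (b^2*t) * (t + (2*b)^2*t^2) - 2*(t + b^2*t^2) + t) := by
    rw [hval, show ((0:ℝ)^2*t/2) = 0 by ring, Real.exp_zero]
    have : Real.exp (2*(-(b^2/2)*t)) * (Real.exp ((2*b)^2*t/2) * (t + (2*b)^2*t^2))
        - 2*Real.exp (-(b^2/2)*t) * (Real.exp (b^2*t/2) * (t + b^2*t^2)) + 1 * (t + 0^2*t^2)
        = Real.exp (b^2*t) * (t + (2*b)^2*t^2) - 2*(t + b^2*t^2) + t := by
      linear_combination (t + (2*b)^2*t^2) * he1 - (2*(t + b^2*t^2)) * he2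
    rw [this]
  rw [hclean]
  have hEle : Real.exp (b^2*t) ≤ Real.exp (b^2*T) :=
    Real.exp_le_exp.mpr (mul_le_mul_of_nonneg_left htT (sq_nonneg b))
  have hE1 : Real.exp (b^2*t) * (1 - b^2*t) ≤ 1 := by
    have h := Real.add_one_le_exp (-(b^2*t))
    have hp := Real.exp_pos (b^2*t)
    have hmul : Real.exp (b^2*t) * Real.exp (-(b^2*t)) = 1 := by
      rw [← Real.exp_add, add_neg_cancel, Real.exp_zero]
    nlinarith
  have ht2 : (0:ℝ) < t^2 := by positivity
  rw [inv_mul_le_iff₀ ht2]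
  have hq1 : b^2*t^2 * Real.exp (b^2*t) ≤ b^2*t^2 * Real.exp (b^2*T) :=
    mul_le_mul_of_nonneg_left hEle (by positivity)
  have hq2 : t * (Real.exp (b^2*t) * (1 - b^2*t)) ≤ t * 1 :=
    mul_le_mul_of_nonneg_left hE1 ht.le
  have hq3 : (0:ℝ) ≤ b^2*t^2 := by positivity
  nlinarith [hq1, hq2, hq3]

/-- For `φ ∈ C²_b(ℝ)` and the linear-SDE solution
`X̄ˣ_t = -c₁/c₂ + (c₁/c₂+x)e^{-c₂²t/2 + c₂W_t}` (resp. `x + c₁ W_t` if `c₂ = 0`),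
there is a constant `C` depending only on `T`, `c₂` and the bounds on `φ` such that
for all `c₁`, `x` and `t ∈ (0,T]`,
`E[(φ(X̄ˣ_t) - φ(x))² (W_t/t)²] ≤ C (c₁ + c₂ x)²`. -/
theorem lognormal_first_weight_variance_bound
    (T c2 : ℝ) (hT : 0 < T) (φ : ℝ → ℝ) (hφ : ContDiff ℝ 2 φ)
    (M : ℝ) (hφb : ∀ y, |φ y| ≤ M ∧ |deriv φ y| ≤ M ∧ |deriv (deriv φ) y| ≤ M) :
    ∃ C > 0, ∀ c1 x : ℝ, ∀ t : ℝ, ∀ ht : t ∈ Set.Ioc (0 : ℝ) T,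
      (∫ w, (φ (if c2 = 0 then x + c1 * w
            else -(c1 / c2) + (c1 / c2 + x) * Real.exp (-(c2 ^ 2 / 2) * t + c2 * w))
          - φ x) ^ 2 * (w / t) ^ 2 ∂(gaussianReal 0 ⟨t, ht.1.le⟩))
        ≤ C * (c1 + c2 * x) ^ 2 := by
  have hM0 : 0 ≤ M := le_trans (abs_nonneg _) (hφb 0).1
  refine ⟨3*M^2 + 5*M^2*Real.exp (c2^2*T) + 1, by positivity, ?_⟩
  intro c1 x t ht
  obtain ⟨ht0, htT⟩ := ht
  have hCle1 : 3*M^2 ≤ 3*M^2 + 5*M^2*Real.exp (c2^2*T) + 1 := by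
    nlinarith [Real.exp_pos (c2^2*T), sq_nonneg M]
  have hCle2 : 5*M^2*Real.exp (c2^2*T) ≤ 3*M^2 + 5*M^2*Real.exp (c2^2*T) + 1 := by
    nlinarith [sq_nonneg M]
  have hlip : ∀ y z : ℝ, |φ y - φ z| ≤ M * |y - z| := by
    have hdiff : Differentiable ℝ φ := hφ.differentiable (by norm_num)
    have hl : LipschitzWith ⟨M, hM0⟩ φ := by
      refine lipschitzWith_of_nnnorm_deriv_le hdiff ?_
      intro y
      show ‖deriv φ y‖ ≤ M
      simpa using (hφb y).2.1
    intro y z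
    have := hl.dist_le_mul y z
    erw [NNReal.coe_mk] at this
    simpa [Real.dist_eq] using this
  by_cases hc2 : c2 = 0
  · subst hc2
    simp only [if_pos rfl, zero_mul, add_zero]
    have hint : Integrable (fun w => (M^2*c1^2*(t^2)⁻¹) * w^4) (gaussianReal 0 ⟨t, ht0.le⟩) :=
      (my_gauss4_int t ht0).const_mul _
    have hmono := integral_mono_of_nonneg (f := fun w =>
        (φ (x + c1 * w) - φ x) ^ 2 * (w / t) ^ 2)
      (g := fun w => (M^2*c1^2*(t^2)⁻¹) * w^4)
      (Filter.Eventually.of_forall fun w => by positivity) hint ?_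
    · have hval := my_gauss4 t ht0
      rw [integral_const_mul, hval] at hmono
      refine le_trans hmono ?_
      have ht2 : (t:ℝ)^2 ≠ 0 := by positivity
      have : M^2*c1^2*(t^2)⁻¹ * (3*t^2) = 3*M^2*c1^2 := by field_simp
      rw [this]
      nlinarith [sq_nonneg c1, Real.exp_pos ((0:ℝ)^2*T), sq_nonneg M, sq_nonneg (c1*M)]
    · filter_upwards with w
      have h1 : |φ (x + c1*w) - φ x| ≤ M * |c1*w| := by
        have := hlip (x + c1*w) x
        simpa [add_sub_cancel_left] using this
      have h2 : (φ (x + c1*w) - φ x)^2 ≤ (M*|c1*w|)^2 := by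
        rw [← sq_abs]
        exact pow_le_pow_left₀ (abs_nonneg _) h1 2
      have h3 : (M*|c1*w|)^2 * (w/t)^2 = M^2*c1^2*(t^2)⁻¹ * w^4 := by
        rw [mul_pow, sq_abs, mul_pow, div_pow]
        field_simp
      calc (φ (x + c1*w) - φ x)^2 * (w/t)^2
          ≤ (M*|c1*w|)^2 * (w/t)^2 := mul_le_mul_of_nonneg_right h2 (sq_nonneg _)
        _ = M^2*c1^2*(t^2)⁻¹ * w^4 := h3
  · simp only [if_neg hc2]
    obtain ⟨hkey_int, hkey_val⟩ := my_key T c2 t ht0 htT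
    have hs : c2 * (c1/c2 + x) = c1 + c2*x := by field_simp
    have hint : Integrable (fun w => (M^2*(c1/c2 + x)^2)
        * ((Real.exp (-(c2^2/2)*t + c2*w) - 1)^2 * (w/t)^2)) (gaussianReal 0 ⟨t, ht0.le⟩) :=
      hkey_int.const_mul _
    have hmono := integral_mono_of_nonneg (f := fun w =>
        (φ (-(c1 / c2) + (c1 / c2 + x) * Real.exp (-(c2 ^ 2 / 2) * t + c2 * w)) - φ x) ^ 2
          * (w / t) ^ 2)
      (g := fun w => (M^2*(c1/c2 + x)^2)
        * ((Real.exp (-(c2^2/2)*t + c2*w) - 1)^2 * (w/t)^2))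
      (Filter.Eventually.of_forall fun w => by positivity) hint ?_
    · rw [integral_const_mul] at hmono
      refine le_trans hmono ?_
      have hb1 : (M^2*(c1/c2 + x)^2)
          * (∫ w, (Real.exp (-(c2^2/2)*t + c2*w) - 1)^2 * (w/t)^2
              ∂(gaussianReal 0 ⟨t, ht0.le⟩))
          ≤ (M^2*(c1/c2 + x)^2) * (5 * c2^2 * Real.exp (c2^2*T)) :=
        mul_le_mul_of_nonneg_left hkey_val (by positivity)
      refine le_trans hb1 ?_
      have heq : (M^2*(c1/c2 + x)^2) * (5 * c2^2 * Real.exp (c2^2*T))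
          = 5*M^2*Real.exp (c2^2*T) * (c1 + c2*x)^2 := by
        rw [← hs]
        ring
      rw [heq]
      exact mul_le_mul_of_nonneg_right hCle2 (sq_nonneg _)
    · filter_upwards with w
      set E := Real.exp (-(c2^2/2)*t + c2*w) with hE
      have hE' : Real.exp (-(c2^2/2)*t + c2*w) = Real.exp (-(c2 ^ 2 / 2) * t + c2 * w) := rfl
      have h1 : |φ (-(c1/c2) + (c1/c2 + x) * E) - φ x| ≤ M * |(c1/c2 + x) * (E - 1)| := by
        have := hlip (-(c1/c2) + (c1/c2 + x) * E) x
        have harg : -(c1/c2) + (c1/c2 + x) * E - x = (c1/c2 + x) * (E - 1) := by ring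
        rwa [harg] at this
      have h2 : (φ (-(c1/c2) + (c1/c2 + x) * E) - φ x)^2 ≤ (M * |(c1/c2 + x) * (E - 1)|)^2 := by
        rw [← sq_abs]
        exact pow_le_pow_left₀ (abs_nonneg _) h1 2
      have h3 : (M * |(c1/c2 + x) * (E - 1)|)^2 * (w/t)^2
          = (M^2*(c1/c2 + x)^2) * ((E - 1)^2 * (w/t)^2) := by
        rw [mul_pow, sq_abs, mul_pow]
        ring
      calc (φ (-(c1 / c2) + (c1 / c2 + x) * Real.exp (-(c2 ^ 2 / 2) * t + c2 * w)) - φ x) ^ 2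
            * (w / t) ^ 2
          = (φ (-(c1/c2) + (c1/c2 + x) * E) - φ x)^2 * (w/t)^2 := by rw [hE, hE']
        _ ≤ (M * |(c1/c2 + x) * (E - 1)|)^2 * (w/t)^2 :=
            mul_le_mul_of_nonneg_right h2 (sq_nonneg _)
        _ = (M^2*(c1/c2 + x)^2) * ((E - 1)^2 * (w/t)^2) := h3
end

section
/- Let $d \ge 1$, $n \ge 1$, and $\bar\mu : [0,T]\times\mathbb{R}^d \to \mathbb{R}^d$ be such that $x \mapsto \bar\mu(t,x)$ is $n$ times differentiable with all derivatives up to order $n$ uniformly bounded (uniformly in $t$). Let $\pi = (0 = s_0 < s_1 < \cdots < s_m = T)$ be any partition of $[0,T]$ and define the Euler scheme $X^{\pi,x}_0 = x$, $X^{\pi,x}_{k+1} = X^{\pi,x}_k + \bar\mu(s_k, X^{\pi,x}_k)(s_{k+1}-s_k) + (W_{s_{k+1}} - W_{s_k})$. Then $x \mapsto X^{\pi,x}_k$ is $n$ times differentiable for each $k$, and there exists a constant $C$ depending only on $T$, $n$, $d$ and the derivative bounds of $\bar\mu$ (but not on the partition $\pi$) such that $\max_{1\le\ell\le n}\max_{i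 \in \{1,\dots,d\}^\ell}\max_{0 \le k \le m} |\partial^\ell_{x,i} X^{\pi,x}_k| \le C$ almost surely. -/
open MeasureTheory

/-- The iterated derivatives of the identity have norm at most `1`. -/
lemma norm_iteratedFDeriv_id_le' {E : Type*} [NormedAddCommGroup E] [NormedSpace ℝ E]
    (i : ℕ) (hi : i ≠ 0) (x : E) : ‖iteratedFDeriv ℝ i (fun y : E => y) x‖ ≤ 1 := by
  match i with
  | 0 => exact absurd rfl hi
  | 1 =>
    refine ContinuousMultilinearMap.opNorm_le_bound zero_le_one fun m => ?_
    rw [iteratedFDeriv_one_apply, fderiv_id']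
    simp [Fin.prod_univ_one]
  | (j+2) =>
    have h1 : ‖iteratedFDeriv ℝ (j+2) (fun y : E => y) x‖
        = ‖iteratedFDeriv ℝ (j+1) (fderiv ℝ (fun y : E => y)) x‖ :=
      (norm_iteratedFDeriv_fderiv).symm
    have h2 : (fderiv ℝ (fun y : E => y)) = fun _ : E => ContinuousLinearMap.id ℝ E := by
      funext y; exact fderiv_id'
    rw [h1, h2, iteratedFDeriv_const_of_ne (Nat.succ_ne_zero j)]
    simp

/-- Uniform bound on the derivatives (in the initial condition) of the Euler scheme:
if `x ↦ μ̄(t,x)` has bounded derivatives up to order `n` (uniformly in `t`), then for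
any partition `π` of `[0,T]` and any realization of the Brownian increments `w`, the
Euler scheme `X^{π,x}` is `n` times differentiable in `x`, with all derivatives up to
order `n` bounded by a constant `C` independent of the partition and of `w`. -/
theorem euler_scheme_derivative_bound
    (d n : ℕ) (hd : 1 ≤ d) (hn : 1 ≤ n) (T : ℝ) (hT : 0 < T) (K : ℝ)
    (μb : ℝ → EuclideanSpace ℝ (Fin d) → EuclideanSpace ℝ (Fin d))
    (hsmooth : ∀ t, ContDiff ℝ n (μb t))
    (hbound : ∀ t x (ℓ : ℕ), 1 ≤ ℓ → ℓ ≤ n → ‖iteratedFDeriv ℝ ℓ (μb t) x‖ ≤ K) :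
    ∃ C : ℝ, ∀ (m : ℕ) (s : ℕ → ℝ), s 0 = 0 → s m = T → (∀ k < m, s k < s (k + 1)) →
      ∀ (w : ℕ → EuclideanSpace ℝ (Fin d))
        (X : ℕ → EuclideanSpace ℝ (Fin d) → EuclideanSpace ℝ (Fin d)),
        (∀ x, X 0 x = x) →
        (∀ k x, k < m → X (k + 1) x = X k x + (s (k + 1) - s k) • μb (s k) (X k x) + w k) →
        ∀ k ≤ m, ContDiff ℝ n (X k) ∧
          ∀ ℓ : ℕ, 1 ≤ ℓ → ℓ ≤ n → ∀ x, ‖iteratedFDeriv ℝ ℓ (X k) x‖ ≤ C := by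
  have hK : 0 ≤ K := le_trans (norm_nonneg _) (hbound 0 0 1 le_rfl hn)
  set A : ℝ := (n.factorial : ℝ) * K with hAdef
  have hA0 : 0 ≤ A := by positivity
  refine ⟨Real.exp (A * T) ^ n, ?_⟩
  intro m s hs0 hsm hslt w X hX0 hXrec
  -- monotonicity of the partition
  have mono : ∀ j k, j ≤ k → k ≤ m → s j ≤ s k := by
    intro j k hjk hkm
    induction k with
    | zero => simp [Nat.le_zero.mp hjk]
    | succ k ih =>
      rcases Nat.lt_or_ge j (k+1) with h | h
      · exact le_trans (ih (Nat.lt_succ_iff.mp h) (le_trans (Nat.le_succ k) hkm))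
          (hslt k hkm).le
      · have : j = k+1 := le_antisymm hjk h
        simp [this]
  -- the key induction on k
  have key : ∀ k, k ≤ m → ContDiff ℝ n (X k) ∧ ∀ i : ℕ, 1 ≤ i → i ≤ n → ∀ x,
      ‖iteratedFDeriv ℝ i (X k) x‖ ≤ Real.exp (A * s k) ^ i := by
    intro k
    induction k with
    | zero =>
      intro _
      have hX0' : X 0 = fun x => x := funext hX0
      constructor
      · rw [hX0']; exact contDiff_id
      · intro i hi1 hin x
        rw [hX0', hs0]
        calc ‖iteratedFDeriv ℝ i (fun y : EuclideanSpace ℝ (Fin d) => y) x‖ ≤ 1 :=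
              norm_iteratedFDeriv_id_le' i (by omega) x
        _ ≤ Real.exp (A * 0) ^ i := by simp
    | succ k ih =>
      intro hk1m
      have hklt : k < m := hk1m
      obtain ⟨hCD, hIH⟩ := ih (le_of_lt hklt)
      set h : ℝ := s (k+1) - s k with hhdef
      have hh : 0 ≤ h := sub_nonneg.2 (hslt k hklt).le
      set F : EuclideanSpace ℝ (Fin d) → EuclideanSpace ℝ (Fin d) :=
        fun y => μb (s k) (X k y) with hFdef
      have hXk1 : X (k+1) = fun y => X k y + (h • F y + w k) := by
        funext y; rw [hXrec k y hklt, add_assoc]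
      have hF : ContDiff ℝ n F := (hsmooth (s k)).comp hCD
      have hCD1 : ContDiff ℝ n (X (k+1)) := by
        rw [hXk1]
        exact hCD.add ((hF.const_smul h).add contDiff_const)
      refine ⟨hCD1, ?_⟩
      intro i hi1 hin x
      have hin' : (i : WithTop ℕ∞) ≤ (n : WithTop ℕ∞) := by exact_mod_cast hin
      have hXi : ContDiff ℝ i (X k) := hCD.of_le hin'
      have hFi : ContDiff ℝ i F := hF.of_le hin'
      -- decompose the iterated derivative of `X (k+1)`
      have e1 : iteratedFDeriv ℝ i (X (k+1)) x
          = iteratedFDeriv ℝ i (X k) x + h • iteratedFDeriv ℝ i F x := by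
        rw [hXk1]
        rw [iteratedFDeriv_add_apply' hXi.contDiffAt ((hFi.const_smul h).add contDiff_const).contDiffAt]
        congr 1
        rw [iteratedFDeriv_add_apply' (hFi.const_smul h).contDiffAt contDiffAt_const,
          iteratedFDeriv_const_of_ne (by omega : i ≠ 0)]
        simp only [Pi.zero_apply, add_zero]
        exact iteratedFDeriv_const_smul_apply' hFi.contDiffAt
      -- bound the iterated derivative of `F = μb (s k) ∘ X k` via Faà di Bruno
      set c : EuclideanSpace ℝ (Fin d) := μb (s k) (X k x) with hcdef
      set g : EuclideanSpace ℝ (Fin d) → EuclideanSpace ℝ (Fin d) :=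
        fun y => μb (s k) y + (-c) with hgdef
      have hg : ContDiff ℝ n g := (hsmooth (s k)).add contDiff_const
      have hgder : ∀ j : ℕ, 1 ≤ j → j ≤ n → ∀ y,
          iteratedFDeriv ℝ j g y = iteratedFDeriv ℝ j (μb (s k)) y := by
        intro j hj1 hjn y
        have hjn' : (j : WithTop ℕ∞) ≤ (n : WithTop ℕ∞) := by exact_mod_cast hjn
        rw [hgdef, iteratedFDeriv_add_apply' ((hsmooth (s k)).of_le hjn').contDiffAt contDiffAt_const,
          iteratedFDeriv_const_of_ne (by omega : j ≠ 0)]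
        simp
      have hC : ∀ j : ℕ, j ≤ i → ‖iteratedFDeriv ℝ j g (X k x)‖ ≤ K := by
        intro j hj
        rcases Nat.eq_zero_or_pos j with rfl | hj1
        · rw [norm_iteratedFDeriv_zero]
          simp [hgdef]
          simpa [hcdef] using hK
        · rw [hgder j hj1 (le_trans hj hin)]
          exact hbound (s k) (X k x) j hj1 (le_trans hj hin)
      have hD : ∀ j : ℕ, 1 ≤ j → j ≤ i → ‖iteratedFDeriv ℝ j (X k) x‖
          ≤ Real.exp (A * s k) ^ j :=
        fun j h1 h2 => hIH j h1 (le_trans h2 hin) x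
      have hcomp : ‖iteratedFDeriv ℝ i (g ∘ X k) x‖
          ≤ (i.factorial : ℝ) * K * Real.exp (A * s k) ^ i :=
        norm_iteratedFDeriv_comp_le hg hCD hin' x hC hD
      have e2 : iteratedFDeriv ℝ i (g ∘ X k) x = iteratedFDeriv ℝ i F x := by
        have hco : g ∘ X k = fun y => F y + (-c) := rfl
        rw [hco, iteratedFDeriv_add_apply' hFi.contDiffAt contDiffAt_const,
          iteratedFDeriv_const_of_ne (by omega : i ≠ 0)]
        simp
      have hFbound : ‖iteratedFDeriv ℝ i F x‖
          ≤ (i.factorial : ℝ) * K * Real.exp (A * s k) ^ i := e2 ▸ hcomp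
      -- put everything together
      have hfacK : (i.factorial : ℝ) * K ≤ A := by
        rw [hAdef]
        exact mul_le_mul_of_nonneg_right (by exact_mod_cast Nat.factorial_le hin) hK
      have hDpos : (0:ℝ) ≤ Real.exp (A * s k) ^ i := by positivity
      calc ‖iteratedFDeriv ℝ i (X (k+1)) x‖
          ≤ ‖iteratedFDeriv ℝ i (X k) x‖ + ‖h‖ * ‖iteratedFDeriv ℝ i F x‖ := by
            rw [e1]; exact (norm_add_le _ _).trans (by rw [norm_smul])
        _ ≤ Real.exp (A * s k) ^ i + h * ((i.factorial : ℝ) * K * Real.exp (A * s k) ^ i) := by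
            rw [Real.norm_eq_abs, abs_of_nonneg hh]
            exact add_le_add (hIH i hi1 hin x) (mul_le_mul_of_nonneg_left hFbound hh)
        _ ≤ Real.exp (A * s k) ^ i * (1 + h * A) := by
            nlinarith [mul_le_mul_of_nonneg_right
              (mul_le_mul_of_nonneg_left hfacK hh) hDpos]
        _ ≤ Real.exp (A * s k) ^ i * Real.exp (h * A) := by
            gcongr
            rw [add_comm]
            exact Real.add_one_le_exp (h * A)
        _ ≤ Real.exp (A * s k) ^ i * Real.exp (h * A) ^ i := by
            gcongr
            exact le_self_pow₀ (Real.one_le_exp (by positivity)) (by omega)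
        _ = Real.exp (A * s (k+1)) ^ i := by
            rw [← mul_pow, ← Real.exp_add]
            congr 2
            rw [hhdef]; ring
  intro k hk
  obtain ⟨h1, h2⟩ := key k hk
  refine ⟨h1, fun ℓ hℓ1 hℓn x => ?_⟩
  calc ‖iteratedFDeriv ℝ ℓ (X k) x‖ ≤ Real.exp (A * s k) ^ ℓ := h2 ℓ hℓ1 hℓn x
    _ ≤ Real.exp (A * T) ^ ℓ :=
        pow_le_pow_left₀ (Real.exp_nonneg _)
          (Real.exp_le_exp.2 (mul_le_mul_of_nonneg_left
            ((mono k m hk le_rfl).trans_eq hsm) hA0)) ℓ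
    _ ≤ Real.exp (A * T) ^ n := by
        have h1T : 0 ≤ A * T := by positivity
        exact pow_le_pow_right₀ (Real.one_le_exp h1T) hℓn
end
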